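/- Let $X$ and $Y$ be Hilbert spaces, let $u \in L^2(0,T;X)$ take values in a finite-dimensional subspace $W \subset X$, and let $L : W \to Y$ be a linear map. Let $\{\lambda_i, \varphi_i\}_{i=1}^s$ ($\lambda_1 \ge \cdots \ge \lambda_s > 0$) be the nonzero eigenvalue-eigenvector pairs of $\mathcal{R}x = \int_0^T (x,u(t))_X\,u(t)\,dt$, with $\{\varphi_i\}$ orthonormal in $X$, and suppose $u(t) = \sum_{i=1}^s (u(t),\varphi_i)_X \varphi_i$ for a.e. $t$. Define $\Pi_r u = \sum_{i=1}^r (u(t),\varphi_i)_X\varphi_i$ for $r \le s$. Then $\int_0^T \|L(u(t) - \Pi_r u(t))\|_Y^2\,dt = \sum_{i=r+1}^s \lambda_i \|L\varphi_i\|_Y^2$. -/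

import Mathlib

open MeasureTheory Set

/-- POD projection error formula in a seminorm induced by a linear map `L`:
`∫₀ᵀ ‖L(u(t) - Π_r u(t))‖² dt = ∑_{i=r+1}^s λ_i ‖L φ_i‖²`. -/
theorem stmt6 {X Y : Type*} [NormedAddCommGroup X] [InnerProductSpace ℝ X] [CompleteSpace X]
    [NormedAddCommGroup Y] [InnerProductSpace ℝ Y]
    (T : ℝ) (hT : 0 < T)
    (W : Submodule ℝ X) [FiniteDimensional ℝ W]
    (u : ℝ → W)
    (hu : MemLp (fun t => (u t : X)) 2 (volume.restrict (Ioc (0:ℝ) T)))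
    (L : W →ₗ[ℝ] Y)
    (s : ℕ) (lam : Fin s → ℝ) (φ : Fin s → W)
    (hlam_pos : ∀ i, 0 < lam i)
    (hlam_mono : ∀ i j : Fin s, i ≤ j → lam j ≤ lam i)
    (hφ : Orthonormal ℝ φ)
    (heig : ∀ j, (∫ t, (inner ℝ (φ j) (u t) : ℝ) • u t ∂(volume.restrict (Ioc (0:ℝ) T)))
      = lam j • φ j)
    (hexp : ∀ᵐ t ∂(volume.restrict (Ioc (0:ℝ) T)),
      u t = ∑ i, (inner ℝ (u t) (φ i) : ℝ) • φ i)
    (r : ℕ) (hr : r ≤ s) :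
    ∫ t, ‖L (u t - ∑ i ∈ Finset.univ.filter (fun i : Fin s => (i : ℕ) < r),
          (inner ℝ (u t) (φ i) : ℝ) • φ i)‖ ^ 2 ∂(volume.restrict (Ioc (0:ℝ) T))
      = ∑ i ∈ Finset.univ.filter (fun i : Fin s => r ≤ (i : ℕ)), lam i * ‖L (φ i)‖ ^ 2 := by
  set μ := volume.restrict (Ioc (0:ℝ) T) with hμdef
  -- u is Memℒp as a W-valued function
  have humem : MemLp u 2 μ := by
    have heq : u = fun t => W.orthogonalProjectionOnto ((u t : X)) := by
      funext t
      simp [Submodule.orthogonalProjectionOnto_mem_subspace_eq_self]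
    rw [heq]
    exact W.orthogonalProjectionOnto.comp_memLp' hu
  set c : Fin s → ℝ → ℝ := fun i t => (inner ℝ (u t) (φ i) : ℝ) with hcdef
  have hc2 : ∀ i, MemLp (c i) 2 μ := fun i => humem.inner_const (φ i)
  have h1211 : (1 : ENNReal) / 1 = 1 / 2 + 1 / 2 := by
    rw [ENNReal.div_add_div_same, one_add_one_eq_two,
      ENNReal.div_self two_ne_zero ENNReal.ofNat_ne_top, div_one]
  have hmul : ∀ i j, Integrable (fun t => c i t * c j t) μ := by
    intro i j
    have := ((hc2 j).smul (hc2 i) (r := 1))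
    rw [memLp_one_iff_integrable] at this
    exact this
  have hsmu : ∀ j, Integrable (fun t => (inner ℝ (φ j) (u t) : ℝ) • u t) μ := by
    intro j
    have hcj : MemLp (fun t => (inner ℝ (φ j) (u t) : ℝ)) 2 μ := humem.const_inner (φ j)
    have := humem.smul hcj (r := 1)
    rw [memLp_one_iff_integrable] at this
    exact this
  rw [orthonormal_iff_ite] at hφ
  have hint : ∀ i j, ∫ t, c i t * c j t ∂μ = if i = j then lam i else 0 := by
    intro i j
    have h1 := integral_inner (𝕜 := ℝ) (hsmu j) (φ i)
    rw [heig j] at h1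
    have h2 : ∀ t, (inner ℝ (φ i) ((inner ℝ (φ j) (u t) : ℝ) • u t) : ℝ) = c j t * c i t := by
      intro t
      show (inner ℝ (φ i) ((inner ℝ (φ j) (u t) : ℝ) • u t) : ℝ)
        = (inner ℝ (u t) (φ j) : ℝ) * (inner ℝ (u t) (φ i) : ℝ)
      rw [real_inner_smul_right, real_inner_comm (φ j), real_inner_comm (φ i)]
    simp only [h2] at h1
    rw [real_inner_smul_right, hφ i j] at h1
    rcases eq_or_ne i j with h | h
    · subst h
      rw [if_pos rfl, mul_one] at h1
      rw [if_pos rfl, ← h1]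
    · rw [if_neg h]
      rw [if_neg h, mul_zero] at h1
      rw [show (fun t => c i t * c j t) = fun t => c j t * c i t from
        funext fun t => mul_comm _ _]
      exact h1
  -- pointwise identity a.e.
  have hpt : ∀ᵐ t ∂μ,
      ‖L (u t - ∑ i ∈ Finset.univ.filter (fun i : Fin s => (i : ℕ) < r), c i t • φ i)‖ ^ 2
      = ∑ i ∈ Finset.univ.filter (fun i : Fin s => r ≤ (i : ℕ)),
          ∑ j ∈ Finset.univ.filter (fun i : Fin s => r ≤ (i : ℕ)),
            (c i t * c j t) * (inner ℝ (L (φ i)) (L (φ j)) : ℝ) := by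
    filter_upwards [hexp] with t ht
    have hfe : Finset.univ.filter (fun i : Fin s => ¬ (i : ℕ) < r)
        = Finset.univ.filter (fun i : Fin s => r ≤ (i : ℕ)) := by
      apply Finset.filter_congr
      intro i _
      simp [not_lt]
    have hdiff : u t - ∑ i ∈ Finset.univ.filter (fun i : Fin s => (i : ℕ) < r), c i t • φ i
        = ∑ i ∈ Finset.univ.filter (fun i : Fin s => r ≤ (i : ℕ)), c i t • φ i := by
      rw [sub_eq_iff_eq_add, ← hfe,
        add_comm, Finset.sum_filter_add_sum_filter_not Finset.univ (fun i : Fin s => (i : ℕ) < r)]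
      exact ht
    rw [hdiff, ← real_inner_self_eq_norm_sq, map_sum]
    simp only [LinearMap.map_smul]
    rw [sum_inner]
    simp only [inner_sum, real_inner_smul_left, real_inner_smul_right, Finset.mul_sum]
    refine Finset.sum_congr rfl fun i _ => Finset.sum_congr rfl fun j _ => by ring
  rw [integral_congr_ae hpt]
  rw [integral_finset_sum _ (fun i _ => integrable_finset_sum _
    (fun j _ => (hmul i j).mul_const _))]
  refine Finset.sum_congr rfl fun i hi => ?_
  rw [integral_finset_sum _ (fun j _ => (hmul i j).mul_const _)]
  have : ∀ j ∈ Finset.univ.filter (fun i : Fin s => r ≤ (i : ℕ)),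
      ∫ t, (c i t * c j t) * (inner ℝ (L (φ i)) (L (φ j)) : ℝ) ∂μ
      = if i = j then lam i * (inner ℝ (L (φ i)) (L (φ j)) : ℝ) else 0 := by
    intro j _
    rw [integral_mul_const, hint i j, ite_mul, zero_mul]
  rw [Finset.sum_congr rfl this, Finset.sum_ite_eq _ i
    (fun j => lam i * (inner ℝ (L (φ i)) (L (φ j)) : ℝ)), if_pos hi,
    real_inner_self_eq_norm_sq]
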